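/- There exists a nowhere-vanishing function f on a connected coordinate patch such that the volume form τ = f √g dx^1 ∧ ⋯ ∧ dx^n satisfies the transposed-derivative equation ∂_μ(f√g) - Γ_{κμ}^κ (f√g) = 0 if and only if the 1-form (T_μ + V_μ) dx^μ is exact, in which case f = C e^θ with T_μ + V_μ = ∂_μ θ and C > 0 constant. -/

import Mathlib

open scoped BigOperators

/-- Partial derivative `∂_μ f` at `x` (coordinate direction `μ`). -/
noncomputable def pd {n : ℕ} (μ : Fin n) (f : (Fin n → ℝ) → ℝ) (x : Fin n → ℝ) : ℝ :=
  fderiv ℝ f x (Pi.single μ 1)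

/-- Covariant derivative of the metric, `D_μ g_{νκ}`. -/
noncomputable def covDg {n : ℕ} (Γ : Fin n → Fin n → Fin n → (Fin n → ℝ) → ℝ)
    (g : Fin n → Fin n → (Fin n → ℝ) → ℝ) (μ ν κ : Fin n) (x : Fin n → ℝ) : ℝ :=
  pd μ (g ν κ) x - (∑ σ, Γ μ ν σ x * g σ κ x) - ∑ σ, Γ μ κ σ x * g ν σ x

/-- Torsion tensor with lowered last index, `T_{μνκ} = (Γ_{μν}^σ - Γ_{νμ}^σ) g_{σκ}`. -/
noncomputable def torLow {n : ℕ} (Γ : Fin n → Fin n → Fin n → (Fin n → ℝ) → ℝ)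
    (g : Fin n → Fin n → (Fin n → ℝ) → ℝ) (μ ν κ : Fin n) (x : Fin n → ℝ) : ℝ :=
  ∑ σ, (Γ μ ν σ x - Γ ν μ σ x) * g σ κ x

/-- Contorsion tensor `K_{μνκ} = -(1/2)(T_{νκμ} + T_{μκν} - T_{μνκ})`. -/
noncomputable def conLow {n : ℕ} (Γ : Fin n → Fin n → Fin n → (Fin n → ℝ) → ℝ)
    (g : Fin n → Fin n → (Fin n → ℝ) → ℝ) (μ ν κ : Fin n) (x : Fin n → ℝ) : ℝ :=
  -(1/2) * (torLow Γ g ν κ μ x + torLow Γ g μ κ ν x - torLow Γ g μ ν κ x)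

/-- Nonmetricity tensor `V_{μνκ} = -(1/2)(D_μ g_{νκ} + D_ν g_{κμ} - D_κ g_{μν})`. -/
noncomputable def nonmetLow {n : ℕ} (Γ : Fin n → Fin n → Fin n → (Fin n → ℝ) → ℝ)
    (g : Fin n → Fin n → (Fin n → ℝ) → ℝ) (μ ν κ : Fin n) (x : Fin n → ℝ) : ℝ :=
  -(1/2) * (covDg Γ g μ ν κ x + covDg Γ g ν κ μ x - covDg Γ g κ μ ν x)

/-- Christoffel symbols `{κ over μν}` of the metric `g` (with inverse metric `ginv`). -/
noncomputable def chr {n : ℕ} (g ginv : Fin n → Fin n → (Fin n → ℝ) → ℝ)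
    (κ μ ν : Fin n) (x : Fin n → ℝ) : ℝ :=
  (1/2) * ∑ σ, ginv κ σ x * (pd μ (g ν σ) x + pd ν (g σ μ) x - pd σ (g μ ν) x)

/-- Trace of the torsion tensor, `T_ν = T_{μν}^μ`. -/
noncomputable def torTr {n : ℕ} (Γ : Fin n → Fin n → Fin n → (Fin n → ℝ) → ℝ)
    (ν : Fin n) (x : Fin n → ℝ) : ℝ :=
  ∑ μ, (Γ μ ν μ x - Γ ν μ μ x)

/-- Trace of the nonmetricity tensor, `V_ν = V_{μν}{}^μ = g^{μσ} V_{μνσ}`. -/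
noncomputable def nonmetTr {n : ℕ} (Γ : Fin n → Fin n → Fin n → (Fin n → ℝ) → ℝ)
    (g ginv : Fin n → Fin n → (Fin n → ℝ) → ℝ) (ν : Fin n) (x : Fin n → ℝ) : ℝ :=
  ∑ μ, ∑ σ, ginv μ σ x * nonmetLow Γ g μ ν σ x

/-- `√g`, the square root of the metric determinant. -/
noncomputable def sqrtg {n : ℕ} (g : Fin n → Fin n → (Fin n → ℝ) → ℝ)
    (x : Fin n → ℝ) : ℝ :=
  Real.sqrt (Matrix.det (Matrix.of fun μ ν => g μ ν x))

lemma contract_aux {n : ℕ} (w c d : Fin n → Fin n → ℝ)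
    (hw : ∀ a t, ∑ s, w a s * d t s = if a = t then 1 else 0) :
    ∑ a, ∑ s, w a s * ∑ t, c a t * d t s = ∑ a, c a a := by
  have h : ∀ a, ∑ s, w a s * ∑ t, c a t * d t s = ∑ t, c a t * ∑ s, w a s * d t s := by
    intro a
    simp only [Finset.mul_sum]
    rw [Finset.sum_comm]
    exact Finset.sum_congr rfl fun t _ => Finset.sum_congr rfl fun s _ => by ring
  simp only [h, hw, mul_ite, mul_one, mul_zero, Finset.sum_ite_eq, Finset.mem_univ, if_true]


lemma my_jacobi {n : ℕ} (A B H : Matrix (Fin n) (Fin n) ℝ)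
    (h1 : A * B = 1) (h2 : B * A = 1) :
    ∑ σ : Equiv.Perm (Fin n), ((Equiv.Perm.sign σ : ℤ) : ℝ) *
      ∑ i, (∏ j ∈ Finset.univ.erase i, A (σ j) j) * H (σ i) i
      = A.det * ∑ μ, ∑ κ, B μ κ * H κ μ := by
  have hadj : Matrix.adjugate A = A.det • B := by
    calc Matrix.adjugate A = Matrix.adjugate A * (A * B) := by rw [h1, mul_one]
    _ = (Matrix.adjugate A * A) * B := by rw [mul_assoc]
    _ = (A.det • 1) * B := by rw [Matrix.adjugate_mul]
    _ = A.det • B := by rw [Matrix.smul_mul, Matrix.one_mul]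
  calc ∑ σ : Equiv.Perm (Fin n), ((Equiv.Perm.sign σ : ℤ) : ℝ) *
      ∑ i, (∏ j ∈ Finset.univ.erase i, A (σ j) j) * H (σ i) i
      = ∑ i, ∑ σ : Equiv.Perm (Fin n), ((Equiv.Perm.sign σ : ℤ) : ℝ) *
          ((∏ j ∈ Finset.univ.erase i, A (σ j) j) * H (σ i) i) := by
        simp only [Finset.mul_sum]; rw [Finset.sum_comm]
    _ = ∑ i, (Matrix.updateCol A i (fun r => H r i)).det := by
        refine Finset.sum_congr rfl fun i _ => ?_
        rw [Matrix.det_apply']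
        refine (Finset.sum_congr rfl fun σ _ => ?_).symm
        congr 1
        rw [← Finset.mul_prod_erase Finset.univ _ (Finset.mem_univ i)]
        rw [Matrix.updateCol_self]
        rw [Finset.prod_congr rfl fun j hj =>
          Matrix.updateCol_ne (Finset.ne_of_mem_erase hj)]
        ring
    _ = ∑ i, ∑ k, Matrix.adjugate A i k * H k i := by
        refine Finset.sum_congr rfl fun i _ => ?_
        rw [← Matrix.cramer_apply, Matrix.cramer_eq_adjugate_mulVec]
        rfl
    _ = A.det * ∑ μ, ∑ κ, B μ κ * H κ μ := by
        simp only [hadj, Matrix.smul_apply, smul_eq_mul, Finset.mul_sum]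
        exact Finset.sum_congr rfl fun i _ => Finset.sum_congr rfl fun k _ => by ring


lemma hasFDerivAt_detg {n : ℕ} (g : Fin n → Fin n → (Fin n → ℝ) → ℝ)
    (hg : ∀ μ ν, Differentiable ℝ (g μ ν)) (x : Fin n → ℝ) :
    HasFDerivAt (fun y => Matrix.det (Matrix.of fun μ ν => g μ ν y))
      (∑ σ : Equiv.Perm (Fin n), ((Equiv.Perm.sign σ : ℤ) : ℝ) •
        ∑ i, (∏ j ∈ Finset.univ.erase i, g (σ j) j x) • fderiv ℝ (g (σ i) i) x) x := by
  have he : (fun y => Matrix.det (Matrix.of fun μ ν => g μ ν y))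
      = fun y => ∑ σ : Equiv.Perm (Fin n), ((Equiv.Perm.sign σ : ℤ) : ℝ) *
          ∏ i, g (σ i) i y := by
    funext y; rw [Matrix.det_apply']; rfl
  rw [he]
  apply HasFDerivAt.fun_sum
  intro σ _
  exact (HasFDerivAt.finset_prod
    (fun i _ => ((hg (σ i) i) x).hasFDerivAt)).const_mul _

lemma pd_detg {n : ℕ} (g : Fin n → Fin n → (Fin n → ℝ) → ℝ)
    (hg : ∀ μ ν, Differentiable ℝ (g μ ν)) (ν : Fin n) (x : Fin n → ℝ) :
    pd ν (fun y => Matrix.det (Matrix.of fun μ ν => g μ ν y)) x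
      = ∑ σ : Equiv.Perm (Fin n), ((Equiv.Perm.sign σ : ℤ) : ℝ) *
          ∑ i, (∏ j ∈ Finset.univ.erase i, g (σ j) j x) * pd ν (g (σ i) i) x := by
  rw [pd, (hasFDerivAt_detg g hg x).fderiv]
  simp [pd, smul_eq_mul]

section
variable {n : ℕ} (Γ : Fin n → Fin n → Fin n → (Fin n → ℝ) → ℝ)
    (g ginv : Fin n → Fin n → (Fin n → ℝ) → ℝ)

lemma matmul_one (hinv' : ∀ μ ν x, (∑ σ, g μ σ x * ginv σ ν x) = if μ = ν then (1:ℝ) else 0)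
    (x : Fin n → ℝ) :
    (Matrix.of fun μ ν => g μ ν x) * (Matrix.of fun μ ν => ginv μ ν x) = 1 := by
  ext μ ν
  rw [Matrix.mul_apply, Matrix.one_apply]
  simpa using hinv' μ ν x

lemma pd_detg_trace
    (hg : ∀ μ ν, Differentiable ℝ (g μ ν))
    (hinv : ∀ μ ν x, (∑ σ, ginv μ σ x * g σ ν x) = if μ = ν then (1:ℝ) else 0)
    (hinv' : ∀ μ ν x, (∑ σ, g μ σ x * ginv σ ν x) = if μ = ν then (1:ℝ) else 0)
    (ν : Fin n) (x : Fin n → ℝ) :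
    pd ν (fun y => Matrix.det (Matrix.of fun μ ν => g μ ν y)) x
      = Matrix.det (Matrix.of fun μ ν => g μ ν x)
        * ∑ μ, ∑ κ, ginv μ κ x * pd ν (g κ μ) x := by
  rw [pd_detg g hg ν x]
  exact my_jacobi (Matrix.of fun μ ν => g μ ν x) (Matrix.of fun μ ν => ginv μ ν x)
    (fun r c => pd ν (g r c) x)
    (matmul_one g ginv hinv' x) (matmul_one ginv g (fun μ ν x => hinv μ ν x) x)

lemma hasFDerivAt_sqrtg
    (hg : ∀ μ ν, Differentiable ℝ (g μ ν))
    (hdet : ∀ y, 0 < Matrix.det (Matrix.of fun μ ν => g μ ν y)) (x : Fin n → ℝ) :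
    HasFDerivAt (sqrtg g)
      ((1 / (2 * Real.sqrt (Matrix.det (Matrix.of fun μ ν => g μ ν x)))) •
        fderiv ℝ (fun y => Matrix.det (Matrix.of fun μ ν => g μ ν y)) x) x := by
  have hd := (hasFDerivAt_detg g hg x).differentiableAt.hasFDerivAt
  exact (Real.hasDerivAt_sqrt (ne_of_gt (hdet x))).comp_hasFDerivAt x hd

lemma diff_sqrtg
    (hg : ∀ μ ν, Differentiable ℝ (g μ ν))
    (hdet : ∀ y, 0 < Matrix.det (Matrix.of fun μ ν => g μ ν y)) :
    Differentiable ℝ (sqrtg g) :=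
  fun x => (hasFDerivAt_sqrtg g hg hdet x).differentiableAt

lemma pd_sqrtg
    (hg : ∀ μ ν, Differentiable ℝ (g μ ν))
    (hdet : ∀ y, 0 < Matrix.det (Matrix.of fun μ ν => g μ ν y))
    (hinv : ∀ μ ν x, (∑ σ, ginv μ σ x * g σ ν x) = if μ = ν then (1:ℝ) else 0)
    (hinv' : ∀ μ ν x, (∑ σ, g μ σ x * ginv σ ν x) = if μ = ν then (1:ℝ) else 0)
    (ν : Fin n) (x : Fin n → ℝ) :
    pd ν (sqrtg g) x
      = sqrtg g x * ((1/2) * ∑ μ, ∑ κ, ginv μ κ x * pd ν (g κ μ) x) := by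
  have h1 : pd ν (sqrtg g) x
      = (1 / (2 * Real.sqrt (Matrix.det (Matrix.of fun μ ν => g μ ν x)))) *
        pd ν (fun y => Matrix.det (Matrix.of fun μ ν => g μ ν y)) x := by
    rw [pd, (hasFDerivAt_sqrtg g hg hdet x).fderiv]
    simp [pd, smul_eq_mul]
  rw [h1, pd_detg_trace g ginv hg hinv hinv' ν x]
  set d := Matrix.det (Matrix.of fun μ ν => g μ ν x) with hd
  have hdpos : 0 < d := hdet x
  have hs : Real.sqrt d * Real.sqrt d = d := Real.mul_self_sqrt hdpos.le
  have hspos : 0 < Real.sqrt d := Real.sqrt_pos.mpr hdpos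
  have hne : Real.sqrt d ≠ 0 := ne_of_gt hspos
  set S := ∑ μ, ∑ κ, ginv μ κ x * pd ν (g κ μ) x with hS
  rw [sqrtg, ← hd]
  field_simp
  linear_combination (-1) * S * hs


lemma ginv_symm
    (hsymm : ∀ μ ν, g μ ν = g ν μ)
    (hinv : ∀ μ ν x, (∑ σ, ginv μ σ x * g σ ν x) = if μ = ν then (1:ℝ) else 0)
    (hinv' : ∀ μ ν x, (∑ σ, g μ σ x * ginv σ ν x) = if μ = ν then (1:ℝ) else 0)
    (μ ν : Fin n) (x : Fin n → ℝ) : ginv μ ν x = ginv ν μ x := by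
  have hABt : ∀ a b, (∑ σ, g a σ x * ginv b σ x) = if a = b then (1:ℝ) else 0 := by
    intro a b
    calc ∑ σ, g a σ x * ginv b σ x = ∑ σ, ginv b σ x * g σ a x :=
          Finset.sum_congr rfl fun σ _ => by rw [hsymm a σ]; ring
    _ = if b = a then (1:ℝ) else 0 := hinv b a x
    _ = if a = b then (1:ℝ) else 0 := by simp [eq_comm]
  symm
  have h1 : ginv ν μ x = ∑ a, (if μ = a then (1:ℝ) else 0) * ginv ν a x := by
    simp [ite_mul, Finset.sum_ite_eq, Finset.mem_univ]
  rw [h1]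
  have h2 : ∀ a, (if μ = a then (1:ℝ) else 0) = ∑ s, ginv μ s x * g s a x :=
    fun a => (hinv μ a x).symm
  simp only [h2]
  have h3 : ∑ a, (∑ s, ginv μ s x * g s a x) * ginv ν a x
      = ∑ s, ginv μ s x * ∑ a, g s a x * ginv ν a x := by
    simp only [Finset.sum_mul, Finset.mul_sum]
    rw [Finset.sum_comm]
    exact Finset.sum_congr rfl fun s _ => Finset.sum_congr rfl fun a _ => by ring
  rw [h3]
  simp only [hABt, mul_ite, mul_one, mul_zero, Finset.sum_ite_eq', Finset.mem_univ, if_true]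

lemma trace_identity
    (hsymm : ∀ μ ν, g μ ν = g ν μ)
    (hinv : ∀ μ ν x, (∑ σ, ginv μ σ x * g σ ν x) = if μ = ν then (1:ℝ) else 0)
    (hinv' : ∀ μ ν x, (∑ σ, g μ σ x * ginv σ ν x) = if μ = ν then (1:ℝ) else 0)
    (ν : Fin n) (x : Fin n → ℝ) :
    torTr Γ ν x + nonmetTr Γ g ginv ν x
      = (∑ κ, Γ κ ν κ x) - (1/2) * ∑ μ, ∑ κ, ginv μ κ x * pd ν (g κ μ) x := by
  have hgs : ∀ μ ν x, ginv μ ν x = ginv ν μ x :=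
    fun μ ν x => ginv_symm g ginv hsymm hinv hinv' μ ν x
  have hδ1 : ∀ a t, ∑ s, ginv a s x * g t s x = if a = t then (1:ℝ) else 0 := by
    intro a t
    rw [Finset.sum_congr rfl fun s _ => by rw [hsymm t s]]
    exact hinv a t x
  have hδ4 : ∀ a t, ∑ s, ginv a s x * g s t x = if a = t then (1:ℝ) else 0 :=
    fun a t => hinv a t x
  have hδ2 : ∀ a t, ∑ s, ginv s a x * g t s x = if a = t then (1:ℝ) else 0 := by
    intro a t
    rw [Finset.sum_congr rfl (fun s _ => mul_comm (ginv s a x) (g t s x))]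
    rw [hinv' t a x]
    simp [eq_comm]
  have hδ3 : ∀ a t, ∑ s, ginv s a x * g s t x = if a = t then (1:ℝ) else 0 := by
    intro a t
    rw [Finset.sum_congr rfl fun s _ => by rw [hsymm s t]]
    exact hδ2 a t
  -- sum manipulation helpers
  have step1 : ∀ (F : Fin n → Fin n → ℝ),
      ∑ μ, ∑ σ, ginv μ σ x * (-(1/2) * F μ σ)
        = -(1/2) * ∑ μ, ∑ σ, ginv μ σ x * F μ σ := by
    intro F
    rw [Finset.mul_sum]
    refine Finset.sum_congr rfl fun μ _ => ?_
    rw [Finset.mul_sum]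
    exact Finset.sum_congr rfl fun σ _ => by ring
  have step2 : ∀ (F1 F2 F3 : Fin n → Fin n → ℝ),
      ∑ μ, ∑ σ, ginv μ σ x * (F1 μ σ + F2 μ σ - F3 μ σ)
        = (∑ μ, ∑ σ, ginv μ σ x * F1 μ σ) + (∑ μ, ∑ σ, ginv μ σ x * F2 μ σ)
          - (∑ μ, ∑ σ, ginv μ σ x * F3 μ σ) := by
    intro F1 F2 F3
    rw [← Finset.sum_add_distrib, ← Finset.sum_sub_distrib]
    refine Finset.sum_congr rfl fun μ _ => ?_
    rw [← Finset.sum_add_distrib, ← Finset.sum_sub_distrib]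
    exact Finset.sum_congr rfl fun σ _ => by ring
  have step3 : ∀ (F1 F2 F3 : Fin n → Fin n → ℝ),
      ∑ μ, ∑ σ, ginv μ σ x * (F1 μ σ - F2 μ σ - F3 μ σ)
        = (∑ μ, ∑ σ, ginv μ σ x * F1 μ σ) - (∑ μ, ∑ σ, ginv μ σ x * F2 μ σ)
          - (∑ μ, ∑ σ, ginv μ σ x * F3 μ σ) := by
    intro F1 F2 F3
    rw [← Finset.sum_sub_distrib, ← Finset.sum_sub_distrib]
    refine Finset.sum_congr rfl fun μ _ => ?_
    rw [← Finset.sum_sub_distrib, ← Finset.sum_sub_distrib]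
    exact Finset.sum_congr rfl fun σ _ => by ring
  have hexp : nonmetTr Γ g ginv ν x
      = -(1/2) * (((∑ μ, ∑ σ, ginv μ σ x * pd μ (g ν σ) x)
              - (∑ μ, ∑ σ, ginv μ σ x * ∑ τ, Γ μ ν τ x * g τ σ x)
              - (∑ μ, ∑ σ, ginv μ σ x * ∑ τ, Γ μ σ τ x * g ν τ x))
          + ((∑ μ, ∑ σ, ginv μ σ x * pd ν (g σ μ) x)
              - (∑ μ, ∑ σ, ginv μ σ x * ∑ τ, Γ ν σ τ x * g τ μ x)
              - (∑ μ, ∑ σ, ginv μ σ x * ∑ τ, Γ ν μ τ x * g σ τ x))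
          - ((∑ μ, ∑ σ, ginv μ σ x * pd σ (g μ ν) x)
              - (∑ μ, ∑ σ, ginv μ σ x * ∑ τ, Γ σ μ τ x * g τ ν x)
              - (∑ μ, ∑ σ, ginv μ σ x * ∑ τ, Γ σ ν τ x * g μ τ x))) := by
    rw [nonmetTr]
    simp only [nonmetLow]
    rw [step1]
    congr 1
    rw [step2 (fun μ σ => covDg Γ g μ ν σ x) (fun μ σ => covDg Γ g ν σ μ x)
      (fun μ σ => covDg Γ g σ μ ν x)]
    simp only [covDg]
    rw [step3 (fun μ σ => pd μ (g ν σ) x) (fun μ σ => ∑ τ, Γ μ ν τ x * g τ σ x)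
        (fun μ σ => ∑ τ, Γ μ σ τ x * g ν τ x),
      step3 (fun μ σ => pd ν (g σ μ) x) (fun μ σ => ∑ τ, Γ ν σ τ x * g τ μ x)
        (fun μ σ => ∑ τ, Γ ν μ τ x * g σ τ x),
      step3 (fun μ σ => pd σ (g μ ν) x) (fun μ σ => ∑ τ, Γ σ μ τ x * g τ ν x)
        (fun μ σ => ∑ τ, Γ σ ν τ x * g μ τ x)]
  -- contraction evaluations
  have cA2 : ∑ μ, ∑ σ, ginv μ σ x * ∑ τ, Γ μ ν τ x * g τ σ x = ∑ κ, Γ κ ν κ x :=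
    contract_aux (fun a s => ginv a s x) (fun a t => Γ a ν t x) (fun t s => g t s x) hδ1
  have cB2 : ∑ μ, ∑ σ, ginv μ σ x * ∑ τ, Γ ν σ τ x * g τ μ x = ∑ κ, Γ ν κ κ x := by
    rw [Finset.sum_comm]
    exact contract_aux (fun a s => ginv s a x) (fun a t => Γ ν a t x) (fun t s => g t s x) hδ2
  have cB3 : ∑ μ, ∑ σ, ginv μ σ x * ∑ τ, Γ ν μ τ x * g σ τ x = ∑ κ, Γ ν κ κ x :=
    contract_aux (fun a s => ginv a s x) (fun a t => Γ ν a t x) (fun t s => g s t x) hδ4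
  have cC3 : ∑ μ, ∑ σ, ginv μ σ x * ∑ τ, Γ σ ν τ x * g μ τ x = ∑ κ, Γ κ ν κ x := by
    rw [Finset.sum_comm]
    exact contract_aux (fun a s => ginv s a x) (fun a t => Γ a ν t x) (fun t s => g s t x) hδ3
  have cC1 : ∑ μ, ∑ σ, ginv μ σ x * pd σ (g μ ν) x
      = ∑ μ, ∑ σ, ginv μ σ x * pd μ (g ν σ) x := by
    rw [Finset.sum_comm]
    refine Finset.sum_congr rfl fun a _ => Finset.sum_congr rfl fun b _ => ?_
    rw [hgs b a x, hsymm b ν]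
  have cC2 : ∑ μ, ∑ σ, ginv μ σ x * ∑ τ, Γ σ μ τ x * g τ ν x
      = ∑ μ, ∑ σ, ginv μ σ x * ∑ τ, Γ μ σ τ x * g ν τ x := by
    rw [Finset.sum_comm]
    refine Finset.sum_congr rfl fun a _ => Finset.sum_congr rfl fun b _ => ?_
    rw [hgs b a x]
    congr 1
    exact Finset.sum_congr rfl fun τ _ => by rw [hsymm τ ν]
  rw [hexp, cA2, cB2, cB3, cC1, cC2, cC3, torTr, Finset.sum_sub_distrib]
  ring

end

/-- There is a nowhere-vanishing `f` with `D̃_μ(f√g) = ∂_μ(f√g) - Γ_{κμ}^κ f√g = 0` iff the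
1-form `(T_μ + V_μ)dx^μ` is exact; moreover any positive such `f` is `C e^θ` with `C > 0`
where `T_μ + V_μ = ∂_μ θ`. -/
theorem transposed_constant_density_iff_exact {n : ℕ}
    (Γ : Fin n → Fin n → Fin n → (Fin n → ℝ) → ℝ)
    (g ginv : Fin n → Fin n → (Fin n → ℝ) → ℝ)
    (hsymm : ∀ μ ν, g μ ν = g ν μ)
    (hg : ∀ μ ν, Differentiable ℝ (g μ ν))
    (hdet : ∀ y, 0 < Matrix.det (Matrix.of fun μ ν => g μ ν y))
    (hinv : ∀ μ ν x, (∑ σ, ginv μ σ x * g σ ν x) = if μ = ν then (1:ℝ) else 0)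
    (hinv' : ∀ μ ν x, (∑ σ, g μ σ x * ginv σ ν x) = if μ = ν then (1:ℝ) else 0) :
    ((∃ f : (Fin n → ℝ) → ℝ, Differentiable ℝ f ∧ (∀ x, f x ≠ 0) ∧
        ∀ μ x, pd μ (fun y => f y * sqrtg g y) x
            - (∑ κ, Γ κ μ κ x) * (f x * sqrtg g x) = 0)
      ↔ ∃ θ : (Fin n → ℝ) → ℝ, Differentiable ℝ θ ∧
          ∀ μ x, torTr Γ μ x + nonmetTr Γ g ginv μ x = pd μ θ x)
    ∧ ∀ f θ : (Fin n → ℝ) → ℝ, Differentiable ℝ f → (∀ x, 0 < f x) →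
        (∀ μ x, pd μ (fun y => f y * sqrtg g y) x
            - (∑ κ, Γ κ μ κ x) * (f x * sqrtg g x) = 0) →
        Differentiable ℝ θ →
        (∀ μ x, torTr Γ μ x + nonmetTr Γ g ginv μ x = pd μ θ x) →
        ∃ C : ℝ, 0 < C ∧ ∀ x, f x = C * Real.exp (θ x) := by
  have hsg : Differentiable ℝ (sqrtg g) := diff_sqrtg g hg hdet
  have hsgpos : ∀ x, 0 < sqrtg g x := fun x => Real.sqrt_pos.mpr (hdet x)
  have hW : ∀ μ x, torTr Γ μ x + nonmetTr Γ g ginv μ x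
      = (∑ κ, Γ κ μ κ x) - (1/2) * ∑ a, ∑ b, ginv a b x * pd μ (g b a) x :=
    fun μ x => trace_identity Γ g ginv hsymm hinv hinv' μ x
  have hpdsq : ∀ μ x, pd μ (sqrtg g) x
      = sqrtg g x * ((1/2) * ∑ a, ∑ b, ginv a b x * pd μ (g b a) x) :=
    fun μ x => pd_sqrtg g ginv hg hdet hinv hinv' μ x
  have hkey : ∀ (f : (Fin n → ℝ) → ℝ), Differentiable ℝ f → ∀ (μ : Fin n) (x : Fin n → ℝ),
      (pd μ (fun y => f y * sqrtg g y) x - (∑ κ, Γ κ μ κ x) * (f x * sqrtg g x) = 0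
        ↔ pd μ f x = (torTr Γ μ x + nonmetTr Γ g ginv μ x) * f x) := by
    intro f hf μ x
    have hprod : pd μ (fun y => f y * sqrtg g y) x
        = f x * pd μ (sqrtg g) x + sqrtg g x * pd μ f x := by
      rw [pd, fderiv_fun_mul (hf x) (hsg x)]
      simp [pd]
    rw [hprod, hpdsq μ x, hW μ x]
    constructor
    · intro h
      have h2 : sqrtg g x * (pd μ f x
          - ((∑ κ, Γ κ μ κ x) - 1/2 * ∑ a, ∑ b, ginv a b x * pd μ (g b a) x) * f x) = 0 := by
        linear_combination h
      rcases mul_eq_zero.mp h2 with h3 | h3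
      · exact absurd h3 (ne_of_gt (hsgpos x))
      · linarith [sub_eq_zero.mp h3]
    · intro h
      linear_combination (sqrtg g x) * h
  constructor
  · constructor
    · rintro ⟨f, hf, hf0, hcond⟩
      refine ⟨fun x => Real.log (f x), ?_, ?_⟩
      · intro x
        exact (Real.differentiableAt_log (hf0 x)).comp x (hf x)
      · intro μ x
        have hcomp : HasFDerivAt (fun y => Real.log (f y)) ((f x)⁻¹ • fderiv ℝ f x) x :=
          (Real.hasDerivAt_log (hf0 x)).comp_hasFDerivAt x (hf x).hasFDerivAt
        have hpdθ : pd μ (fun y => Real.log (f y)) x = (f x)⁻¹ * pd μ f x := by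
          rw [pd, hcomp.fderiv]
          simp [pd]
        have h := (hkey f hf μ x).mp (hcond μ x)
        rw [hpdθ, h]
        field_simp [hf0 x]
    · rintro ⟨θ, hθ, hθW⟩
      have hde : Differentiable ℝ (fun x => Real.exp (θ x)) := fun x =>
        ((Real.hasDerivAt_exp (θ x)).comp_hasFDerivAt x (hθ x).hasFDerivAt).differentiableAt
      refine ⟨fun x => Real.exp (θ x), hde,
        fun x => (Real.exp_pos _).ne', fun μ x => ?_⟩
      apply (hkey (fun x => Real.exp (θ x)) hde μ x).mpr
      have hcomp : HasFDerivAt (fun y => Real.exp (θ y))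
          (Real.exp (θ x) • fderiv ℝ θ x) x :=
        (Real.hasDerivAt_exp (θ x)).comp_hasFDerivAt x (hθ x).hasFDerivAt
      have hpdf : pd μ (fun y => Real.exp (θ y)) x = Real.exp (θ x) * pd μ θ x := by
        rw [pd, hcomp.fderiv]
        simp [pd]
      rw [hpdf, ← hθW μ x]
      ring
  · intro f θ hf hfpos hcond hθ hθW
    have hfW : ∀ μ x, pd μ f x = (torTr Γ μ x + nonmetTr Γ g ginv μ x) * f x :=
      fun μ x => (hkey f hf μ x).mp (hcond μ x)
    have hd1 : Differentiable ℝ (fun x => Real.exp (-θ x)) := fun x =>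
      ((hθ x).hasFDerivAt.neg.exp).differentiableAt
    have hdh : Differentiable ℝ (fun x => f x * Real.exp (-θ x)) := hf.mul hd1
    have hfd : ∀ x, fderiv ℝ (fun x => f x * Real.exp (-θ x)) x = 0 := by
      intro x
      have hpdneg : ∀ μ, pd μ (fun y => Real.exp (-θ y)) x
          = Real.exp (-θ x) * (-(pd μ θ x)) := by
        intro μ
        have hneg : HasFDerivAt (fun y => -θ y) (-(fderiv ℝ θ x)) x := (hθ x).hasFDerivAt.neg
        have hcomp : HasFDerivAt (fun y => Real.exp (-θ y))
            (Real.exp (-θ x) • -(fderiv ℝ θ x)) x :=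
          hneg.exp
        rw [pd, hcomp.fderiv]
        simp [pd]
      have hzero : ∀ μ, fderiv ℝ (fun x => f x * Real.exp (-θ x)) x (Pi.single μ 1) = 0 := by
        intro μ
        have hpdh : pd μ (fun y => f y * Real.exp (-θ y)) x
            = f x * pd μ (fun y => Real.exp (-θ y)) x + Real.exp (-θ x) * pd μ f x := by
          rw [pd, fderiv_fun_mul (hf x) (hd1 x)]
          simp [pd]
        have : fderiv ℝ (fun x => f x * Real.exp (-θ x)) x (Pi.single μ 1)
            = pd μ (fun y => f y * Real.exp (-θ y)) x := rfl
        rw [this, hpdh, hpdneg μ, hfW μ x, ← hθW μ x]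
        ring
      apply ContinuousLinearMap.coe_injective
      apply Module.Basis.ext (Pi.basisFun ℝ (Fin n))
      intro μ
      simpa using hzero μ
    have hconst : ∀ x, f x * Real.exp (-θ x) = f 0 * Real.exp (-θ 0) :=
      fun x => is_const_of_fderiv_eq_zero hdh hfd x 0
    refine ⟨f 0 * Real.exp (-θ 0), mul_pos (hfpos 0) (Real.exp_pos _), fun x => ?_⟩
    calc f x = (f x * Real.exp (-θ x)) * Real.exp (θ x) := by
          rw [mul_assoc, ← Real.exp_add]; simp
    _ = (f 0 * Real.exp (-θ 0)) * Real.exp (θ x) := by rw [hconst x]
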